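/- arXiv:1603.04605 — 2 statements merged into one kernel-verified Lean document; each statement's English description precedes it below -/
import Mathlib

section
/- (Theorem 2) Consider the closed-loop system under the shift and optimizer decrease conditions, with B̂_x and B̂_u positive definite recentered relaxed barrier functions for the compact polytopes X = {x : C_x x ≤ d_x} and U = {u : C_u u ≤ d_u} (all entries of d_x, d_u strictly positive), with P*_uc a symmetric positive semidefinite DARE solution for (A,B,Q,R), and assume the closed-loop trajectories satisfy (U(k),x(k)) → (0,0) as k → ∞. Define α̂(k) := Ĵ_N(U(k),x(k)) − x(k)ᵀP*_uc x(k), and the maximal constraint violation quantities ẑ_xⁱ(k) := sup{C_xⁱξ − d_xⁱ : ξ ∈ ℝⁿ, ε·B̂_x(ξ) ≤ α̂(k)} and ẑ_uʲ(k) := sup{C_uʲv − d_uʲ : v ∈ ℝᵐ, ε·B̂_u(v) ≤ α̂(k)}. Then for every initialization (U₀,x₀), every sequence i_T(k) ∈ ℕ, every k ∈ ℕ, and all rows i, j: (a) C_xⁱ x(k) ≤ d_xⁱ + ẑ_xⁱ(k) and C_uʲ u(k) ≤ d_uʲ + ẑ_uʲ(k) with u(k) = Π₀U(k); (b) ẑ_xⁱ(k+1)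 ≤ ẑ_xⁱ(k) and ẑ_uʲ(k+1) ≤ ẑ_uʲ(k); (c) there exists a finite k₀ ∈ ℕ such that ẑ_xⁱ(k) ≤ 0 and ẑ_uʲ(k) ≤ 0 for all k ≥ k₀ and all i, j. -/
open Matrix

/-- Predicted states: `x₀(U,x) = x`, `x_{k+1}(U,x) = A x_k(U,x) + B u_k`. -/
noncomputable def predState {n m N : ℕ} (A : Matrix (Fin n) (Fin n) ℝ)
    (B : Matrix (Fin n) (Fin m) ℝ) (u : Fin N → Fin m → ℝ) (x : Fin n → ℝ) :
    ℕ → Fin n → ℝ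
  | 0 => x
  | k + 1 => A.mulVec (predState A B u x k) +
      (if h : k < N then B.mulVec (u ⟨k, h⟩) else 0)

/-- The relaxed stage cost `ℓ̂(x,u) = xᵀQx + uᵀRu + ε B̂_x(x) + ε B̂_u(u)`. -/
noncomputable def stageCost {n m : ℕ} (Q : Matrix (Fin n) (Fin n) ℝ)
    (R : Matrix (Fin m) (Fin m) ℝ) (ε : ℝ)
    (Bx : (Fin n → ℝ) → ℝ) (Bu : (Fin m → ℝ) → ℝ)
    (x : Fin n → ℝ) (u : Fin m → ℝ) : ℝ :=
  x ⬝ᵥ Q.mulVec x + u ⬝ᵥ R.mulVec u + ε * Bx x + ε * Bu u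

/-- The relaxed barrier function based MPC cost. -/
noncomputable def mpcCost {n m N : ℕ} (A : Matrix (Fin n) (Fin n) ℝ)
    (B : Matrix (Fin n) (Fin m) ℝ) (Q : Matrix (Fin n) (Fin n) ℝ)
    (R : Matrix (Fin m) (Fin m) ℝ) (P : Matrix (Fin n) (Fin n) ℝ) (ε : ℝ)
    (Bx : (Fin n → ℝ) → ℝ) (Bu : (Fin m → ℝ) → ℝ)
    (u : Fin N → Fin m → ℝ) (x : Fin n → ℝ) : ℝ :=
  (∑ k : Fin N, stageCost Q R ε Bx Bu (predState A B u x k) (u k)) +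
    (predState A B u x N) ⬝ᵥ P.mulVec (predState A B u x N)

/-- The shift operator `Ψ_s(U,x) = (u₁,…,u_{N−1}, k_f(U,x))`. -/
def shiftOp {n m N : ℕ} (kf : (Fin N → Fin m → ℝ) → (Fin n → ℝ) → Fin m → ℝ)
    (u : Fin N → Fin m → ℝ) (x : Fin n → ℝ) : Fin N → Fin m → ℝ :=
  fun i => if h : (i : ℕ) + 1 < N then u ⟨(i : ℕ) + 1, h⟩ else kf u x

/-- The iterated optimization operator. -/
def PhiIter {n m N : ℕ} [NeZero N] (A : Matrix (Fin n) (Fin n) ℝ)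
    (B : Matrix (Fin n) (Fin m) ℝ)
    (kf : (Fin N → Fin m → ℝ) → (Fin n → ℝ) → Fin m → ℝ)
    (Ψo : (Fin N → Fin m → ℝ) → (Fin n → ℝ) → Fin N → Fin m → ℝ) :
    ℕ → (Fin N → Fin m → ℝ) → (Fin n → ℝ) → Fin N → Fin m → ℝ
  | 0, u, x => shiftOp kf u x
  | i + 1, u, x => Ψo (PhiIter A B kf Ψo i u x) (A.mulVec x + B.mulVec (u 0))

/-- The closed-loop system `x(k+1) = Ax(k) + BΠ₀U(k)`, `U(k+1) = Φ^{i_T(k)}(U(k),x(k))`. -/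
def cloop {n m N : ℕ} [NeZero N] (A : Matrix (Fin n) (Fin n) ℝ)
    (B : Matrix (Fin n) (Fin m) ℝ)
    (kf : (Fin N → Fin m → ℝ) → (Fin n → ℝ) → Fin m → ℝ)
    (Ψo : (Fin N → Fin m → ℝ) → (Fin n → ℝ) → Fin N → Fin m → ℝ)
    (iT : ℕ → ℕ) (U0 : Fin N → Fin m → ℝ) (x0 : Fin n → ℝ) :
    ℕ → (Fin N → Fin m → ℝ) × (Fin n → ℝ)
  | 0 => (U0, x0)
  | k + 1 =>
    (PhiIter A B kf Ψo (iT k) (cloop A B kf Ψo iT U0 x0 k).1 (cloop A B kf Ψo iT U0 x0 k).2,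
      A.mulVec (cloop A B kf Ψo iT U0 x0 k).2 + B.mulVec ((cloop A B kf Ψo iT U0 x0 k).1 0))




open Filter in
lemma myHelper.dot_left {a b : ℕ} (X : Matrix (Fin a) (Fin b) ℝ) (u : Fin b → ℝ)
    (y : Fin a → ℝ) : X.mulVec u ⬝ᵥ y = u ⬝ᵥ Xᵀ.mulVec y := by
  rw [Matrix.mulVec_transpose, dotProduct_comm, Matrix.dotProduct_mulVec, dotProduct_comm]

lemma myHelper.dot_right {a b : ℕ} (X : Matrix (Fin a) (Fin b) ℝ) (u : Fin b → ℝ)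
    (y : Fin a → ℝ) : y ⬝ᵥ X.mulVec u = Xᵀ.mulVec y ⬝ᵥ u := by
  rw [Matrix.mulVec_transpose, Matrix.dotProduct_mulVec]

open Filter in
lemma myHelper.sublevel_compact {d : ℕ} {f : (Fin d → ℝ) → ℝ} (hf : Continuous f)
    (hru : Tendsto f (cocompact _) atTop) (c : ℝ) : IsCompact {ξ | f ξ ≤ c} := by
  obtain ⟨K, hK, hKs⟩ := Filter.mem_cocompact.mp (hru (Filter.Ici_mem_atTop (c + 1)))
  refine hK.of_isClosed_subset (isClosed_le hf continuous_const) ?_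
  intro ξ hξ
  by_contra hb
  have h2 : c + 1 ≤ f ξ := hKs hb
  have h3 : f ξ ≤ c := hξ
  linarith

lemma myHelper.continuous_mulVec {a b : ℕ} {X : Type*} [TopologicalSpace X]
    (M : Matrix (Fin a) (Fin b) ℝ) {f : X → Fin b → ℝ} (hf : Continuous f) :
    Continuous fun p => M.mulVec (f p) := by
  apply continuous_pi; intro i
  simp only [Matrix.mulVec, dotProduct]
  exact continuous_finset_sum _ fun j _ => continuous_const.mul ((continuous_apply j).comp hf)

lemma myHelper.continuous_dot {a : ℕ} {X : Type*} [TopologicalSpace X]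
    {f g : X → Fin a → ℝ} (hf : Continuous f) (hg : Continuous g) :
    Continuous fun p => f p ⬝ᵥ g p := by
  simp only [dotProduct]
  exact continuous_finset_sum _ fun j _ =>
    ((continuous_apply j).comp hf).mul ((continuous_apply j).comp hg)

lemma myHelper.dare_step {n m : ℕ} (A : Matrix (Fin n) (Fin n) ℝ)
    (B : Matrix (Fin n) (Fin m) ℝ) (Q : Matrix (Fin n) (Fin n) ℝ)
    (R : Matrix (Fin m) (Fin m) ℝ) (Puc : Matrix (Fin n) (Fin n) ℝ)
    (hRsymm : R.IsSymm) (hRpd : ∀ u : Fin m → ℝ, u ≠ 0 → 0 < u ⬝ᵥ R.mulVec u)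
    (hPucsymm : Puc.IsSymm) (hPucpsd : ∀ x : Fin n → ℝ, 0 ≤ x ⬝ᵥ Puc.mulVec x)
    (hDARE : Puc = Aᵀ * Puc * A -
      Aᵀ * Puc * B * (R + Bᵀ * Puc * B)⁻¹ * Bᵀ * Puc * A + Q)
    (x : Fin n → ℝ) (u : Fin m → ℝ) :
    x ⬝ᵥ Puc.mulVec x ≤ x ⬝ᵥ Q.mulVec x + u ⬝ᵥ R.mulVec u +
      (A.mulVec x + B.mulVec u) ⬝ᵥ Puc.mulVec (A.mulVec x + B.mulVec u) := by
  set M : Matrix (Fin m) (Fin m) ℝ := R + Bᵀ * Puc * B with hM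
  have hMsymm : Mᵀ = M := by
    rw [hM, Matrix.transpose_add, hRsymm.eq, Matrix.transpose_mul, Matrix.transpose_mul,
      Matrix.transpose_transpose, hPucsymm.eq, Matrix.mul_assoc]
  have hquad : ∀ v : Fin m → ℝ, v ⬝ᵥ M.mulVec v =
      v ⬝ᵥ R.mulVec v + B.mulVec v ⬝ᵥ Puc.mulVec (B.mulVec v) := by
    intro v
    rw [hM, Matrix.add_mulVec, dotProduct_add]
    congr 1
    rw [← Matrix.mulVec_mulVec, ← Matrix.mulVec_mulVec,
      myHelper.dot_right Bᵀ (Puc.mulVec (B.mulVec v)) v, Matrix.transpose_transpose]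
  have hMpsd : ∀ v : Fin m → ℝ, 0 ≤ v ⬝ᵥ M.mulVec v := by
    intro v
    rw [hquad v]
    rcases eq_or_ne v 0 with rfl | hv
    · simp
    · exact add_nonneg (hRpd v hv).le (hPucpsd _)
  have hMpd : M.PosDef := by
    refine Matrix.PosDef.of_dotProduct_mulVec_pos ?_ fun v hv => ?_
    · show Mᴴ = M
      rw [show Mᴴ = Mᵀ from rfl, hMsymm]
    · show 0 < star v ⬝ᵥ M.mulVec v
      rw [star_trivial, hquad v]
      exact add_pos_of_pos_of_nonneg (hRpd v hv) (hPucpsd _)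
  have hMdet : IsUnit M.det := (Matrix.isUnit_iff_isUnit_det M).mp hMpd.isUnit
  have hMMinv : M * M⁻¹ = 1 := Matrix.mul_nonsing_inv M hMdet
  have hMinvsymm : (M⁻¹)ᵀ = M⁻¹ := by rw [Matrix.transpose_nonsing_inv, hMsymm]
  set s : Matrix (Fin m) (Fin n) ℝ := Bᵀ * Puc * A with hs
  set w : Fin m → ℝ := (M⁻¹ * s).mulVec x with hw
  have key : 0 ≤ (u + w) ⬝ᵥ M.mulVec (u + w) := hMpsd _
  have hMw : M.mulVec w = s.mulVec x := by
    rw [hw, Matrix.mulVec_mulVec, ← Matrix.mul_assoc, hMMinv, Matrix.one_mul]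
  -- expand key
  have hterm1 : u ⬝ᵥ M.mulVec w = u ⬝ᵥ s.mulVec x := by rw [hMw]
  have hterm2 : w ⬝ᵥ M.mulVec u = u ⬝ᵥ s.mulVec x := by
    rw [myHelper.dot_right M u w, hMsymm, hMw, dotProduct_comm]
  have hterm3 : w ⬝ᵥ M.mulVec w = x ⬝ᵥ (sᵀ * M⁻¹ * s).mulVec x := by
    rw [hMw, hw, myHelper.dot_left (M⁻¹ * s) x (s.mulVec x), Matrix.transpose_mul,
      hMinvsymm, Matrix.mulVec_mulVec]
  have hkey2 : 0 ≤ u ⬝ᵥ M.mulVec u + 2 * (u ⬝ᵥ s.mulVec x) + x ⬝ᵥ (sᵀ * M⁻¹ * s).mulVec x := by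
    have expand : (u + w) ⬝ᵥ M.mulVec (u + w) =
        u ⬝ᵥ M.mulVec u + u ⬝ᵥ M.mulVec w + w ⬝ᵥ M.mulVec u + w ⬝ᵥ M.mulVec w := by
      rw [Matrix.mulVec_add, dotProduct_add, add_dotProduct, add_dotProduct]
      ring
    rw [expand, hterm1, hterm2, hterm3] at key
    linarith
  -- expand the target
  have hcross : A.mulVec x ⬝ᵥ Puc.mulVec (B.mulVec u) = u ⬝ᵥ s.mulVec x := by
    have htr : (Aᵀ * Puc * B)ᵀ = s := by
      rw [Matrix.transpose_mul, Matrix.transpose_mul, Matrix.transpose_transpose,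
        hPucsymm.eq, hs, Matrix.mul_assoc]
    rw [myHelper.dot_left A x, Matrix.mulVec_mulVec, Matrix.mulVec_mulVec,
      myHelper.dot_right (Aᵀ * Puc * B) u x, htr, dotProduct_comm]
  have hcross2 : B.mulVec u ⬝ᵥ Puc.mulVec (A.mulVec x) = u ⬝ᵥ s.mulVec x := by
    rw [myHelper.dot_left B u, Matrix.mulVec_mulVec, Matrix.mulVec_mulVec, hs,
      Matrix.mul_assoc]
  have hAA : A.mulVec x ⬝ᵥ Puc.mulVec (A.mulVec x) = x ⬝ᵥ (Aᵀ * Puc * A).mulVec x := by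
    rw [myHelper.dot_left A x, Matrix.mulVec_mulVec, Matrix.mulVec_mulVec, Matrix.mul_assoc]
  have hBB : B.mulVec u ⬝ᵥ Puc.mulVec (B.mulVec u) = u ⬝ᵥ (Bᵀ * Puc * B).mulVec u := by
    rw [myHelper.dot_left B u, Matrix.mulVec_mulVec, Matrix.mulVec_mulVec, Matrix.mul_assoc]
  have hexp : (A.mulVec x + B.mulVec u) ⬝ᵥ Puc.mulVec (A.mulVec x + B.mulVec u) =
      x ⬝ᵥ (Aᵀ * Puc * A).mulVec x + 2 * (u ⬝ᵥ s.mulVec x) + u ⬝ᵥ (Bᵀ * Puc * B).mulVec u := by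
    rw [Matrix.mulVec_add, dotProduct_add, add_dotProduct, add_dotProduct, hcross, hcross2,
      hAA, hBB]
    ring
  -- use the DARE
  have hPx : x ⬝ᵥ Puc.mulVec x =
      x ⬝ᵥ (Aᵀ * Puc * A).mulVec x - x ⬝ᵥ (sᵀ * M⁻¹ * s).mulVec x + x ⬝ᵥ Q.mulVec x := by
    have hmat : Aᵀ * Puc * B * (R + Bᵀ * Puc * B)⁻¹ * Bᵀ * Puc * A = sᵀ * M⁻¹ * s := by
      rw [hs, hM, Matrix.transpose_mul, Matrix.transpose_mul, Matrix.transpose_transpose,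
        hPucsymm.eq]
      simp only [Matrix.mul_assoc]
    conv_lhs => rw [hDARE]
    rw [hmat, Matrix.add_mulVec, Matrix.sub_mulVec, dotProduct_add, dotProduct_sub]
  -- M quadratic form in terms of R and BᵀPucB
  have hMu : u ⬝ᵥ M.mulVec u = u ⬝ᵥ R.mulVec u + u ⬝ᵥ (Bᵀ * Puc * B).mulVec u := by
    rw [hM, Matrix.add_mulVec, dotProduct_add]
  rw [hexp, hPx]
  rw [hMu] at hkey2
  linarith

lemma myHelper.predState_zero {n m N : ℕ} (A : Matrix (Fin n) (Fin n) ℝ)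
    (B : Matrix (Fin n) (Fin m) ℝ) (k : ℕ) :
    predState (N := N) A B 0 0 k = 0 := by
  induction k with
  | zero => rfl
  | succ k ih =>
    by_cases h : k < N <;> simp [predState, ih, h, Matrix.mulVec_zero]

lemma myHelper.mpcCost_zero {n m N : ℕ} (A : Matrix (Fin n) (Fin n) ℝ)
    (B : Matrix (Fin n) (Fin m) ℝ) (Q : Matrix (Fin n) (Fin n) ℝ)
    (R : Matrix (Fin m) (Fin m) ℝ) (P : Matrix (Fin n) (Fin n) ℝ) (ε : ℝ)
    (Bx : (Fin n → ℝ) → ℝ) (Bu : (Fin m → ℝ) → ℝ) (hBx0 : Bx 0 = 0) (hBu0 : Bu 0 = 0) :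
    mpcCost (N := N) A B Q R P ε Bx Bu 0 0 = 0 := by
  simp [mpcCost, stageCost, myHelper.predState_zero, hBx0, hBu0, Matrix.mulVec_zero]

lemma myHelper.continuous_predState {n m N : ℕ} (A : Matrix (Fin n) (Fin n) ℝ)
    (B : Matrix (Fin n) (Fin m) ℝ) (k : ℕ) :
    Continuous fun p : (Fin N → Fin m → ℝ) × (Fin n → ℝ) => predState A B p.1 p.2 k := by
  induction k with
  | zero => exact continuous_snd
  | succ k ih =>
    show Continuous fun p : (Fin N → Fin m → ℝ) × (Fin n → ℝ) =>
      A.mulVec (predState A B p.1 p.2 k) + _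
    apply (myHelper.continuous_mulVec A ih).add
    by_cases h : k < N
    · simp only [dif_pos h]
      exact myHelper.continuous_mulVec B ((continuous_apply (⟨k, h⟩ : Fin N)).comp continuous_fst)
    · simp only [dif_neg h]
      exact continuous_const

lemma myHelper.continuous_mpcCost {n m N : ℕ} (A : Matrix (Fin n) (Fin n) ℝ)
    (B : Matrix (Fin n) (Fin m) ℝ) (Q : Matrix (Fin n) (Fin n) ℝ)
    (R : Matrix (Fin m) (Fin m) ℝ) (P : Matrix (Fin n) (Fin n) ℝ) (ε : ℝ)
    {Bx : (Fin n → ℝ) → ℝ} {Bu : (Fin m → ℝ) → ℝ}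
    (hBxcont : Continuous Bx) (hBucont : Continuous Bu) :
    Continuous fun p : (Fin N → Fin m → ℝ) × (Fin n → ℝ) =>
      mpcCost A B Q R P ε Bx Bu p.1 p.2 := by
  unfold mpcCost
  apply Continuous.add
  · apply continuous_finset_sum
    intro k _
    unfold stageCost
    have hx := myHelper.continuous_predState A B (N := N) (k : ℕ)
    have hu : Continuous fun p : (Fin N → Fin m → ℝ) × (Fin n → ℝ) => p.1 k :=
      (continuous_apply k).comp continuous_fst
    exact (((myHelper.continuous_dot hx (myHelper.continuous_mulVec Q hx)).add
      (myHelper.continuous_dot hu (myHelper.continuous_mulVec R hu))).add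
      (continuous_const.mul (hBxcont.comp hx))).add
      (continuous_const.mul (hBucont.comp hu))
  · have hx := myHelper.continuous_predState A B (N := N) N
    exact myHelper.continuous_dot hx (myHelper.continuous_mulVec P hx)

lemma myHelper.stage_nonneg {n m : ℕ} {Q : Matrix (Fin n) (Fin n) ℝ}
    {R : Matrix (Fin m) (Fin m) ℝ} {ε : ℝ} (hε : 0 < ε)
    {Bx : (Fin n → ℝ) → ℝ} {Bu : (Fin m → ℝ) → ℝ}
    (hQpsd : ∀ x : Fin n → ℝ, 0 ≤ x ⬝ᵥ Q.mulVec x)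
    (hRpd : ∀ u : Fin m → ℝ, u ≠ 0 → 0 < u ⬝ᵥ R.mulVec u)
    (hBx0 : Bx 0 = 0) (hBxpos : ∀ x : Fin n → ℝ, x ≠ 0 → 0 < Bx x)
    (hBu0 : Bu 0 = 0) (hBupos : ∀ u : Fin m → ℝ, u ≠ 0 → 0 < Bu u)
    (x : Fin n → ℝ) (u : Fin m → ℝ) :
    ε * Bx x + ε * Bu u ≤ stageCost Q R ε Bx Bu x u ∧
      0 ≤ ε * Bx x ∧ 0 ≤ ε * Bu u ∧
      x ⬝ᵥ Q.mulVec x + u ⬝ᵥ R.mulVec u + ε * Bx x + ε * Bu u = stageCost Q R ε Bx Bu x u := by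
  have hR : 0 ≤ u ⬝ᵥ R.mulVec u := by
    rcases eq_or_ne u 0 with rfl | h
    · simp
    · exact (hRpd u h).le
  have hBxn : 0 ≤ Bx x := by
    rcases eq_or_ne x 0 with rfl | h
    · simp [hBx0]
    · exact (hBxpos x h).le
  have hBun : 0 ≤ Bu u := by
    rcases eq_or_ne u 0 with rfl | h
    · simp [hBu0]
    · exact (hBupos u h).le
  refine ⟨?_, mul_nonneg hε.le hBxn, mul_nonneg hε.le hBun, rfl⟩
  unfold stageCost
  have := hQpsd x
  linarith


/-- (Theorem 2) Along closed-loop trajectories the state and input constraints are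
violated by at most `ẑ_x(k)`, `ẑ_u(k)`; these maximal violation bounds are monotonically
nonincreasing in `k` and become nonpositive after finitely many steps. -/
theorem maximal_constraint_violation
    {n m N qx qu : ℕ} [NeZero N]
    (A : Matrix (Fin n) (Fin n) ℝ) (B : Matrix (Fin n) (Fin m) ℝ)
    (Q : Matrix (Fin n) (Fin n) ℝ) (R : Matrix (Fin m) (Fin m) ℝ)
    (P Puc : Matrix (Fin n) (Fin n) ℝ) (ε : ℝ) (hε : 0 < ε)
    (Cx : Matrix (Fin qx) (Fin n) ℝ) (dx : Fin qx → ℝ)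
    (Cu : Matrix (Fin qu) (Fin m) ℝ) (du : Fin qu → ℝ)
    (Bx : (Fin n → ℝ) → ℝ) (Bu : (Fin m → ℝ) → ℝ)
    (kf : (Fin N → Fin m → ℝ) → (Fin n → ℝ) → Fin m → ℝ)
    (Ψo : (Fin N → Fin m → ℝ) → (Fin n → ℝ) → Fin N → Fin m → ℝ)
    (γ : (Fin N → Fin m → ℝ) → (Fin n → ℝ) → ℝ)
    (iT : ℕ → ℕ) (U0 : Fin N → Fin m → ℝ) (x0 : Fin n → ℝ)
    (hQsymm : Q.IsSymm) (hQpsd : ∀ x : Fin n → ℝ, 0 ≤ x ⬝ᵥ Q.mulVec x)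
    (hRsymm : R.IsSymm) (hRpd : ∀ u : Fin m → ℝ, u ≠ 0 → 0 < u ⬝ᵥ R.mulVec u)
    (hPsymm : P.IsSymm) (hPpd : ∀ x : Fin n → ℝ, x ≠ 0 → 0 < x ⬝ᵥ P.mulVec x)
    (hdx : ∀ i, 0 < dx i) (hdu : ∀ j, 0 < du j)
    (hXcompact : IsCompact {x : Fin n → ℝ | Cx.mulVec x ≤ dx})
    (hUcompact : IsCompact {u : Fin m → ℝ | Cu.mulVec u ≤ du})
    (hBxcont : Continuous Bx) (hBx0 : Bx 0 = 0)
    (hBxpos : ∀ x : Fin n → ℝ, x ≠ 0 → 0 < Bx x)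
    (hBxru : Filter.Tendsto Bx (Filter.cocompact _) Filter.atTop)
    (hBucont : Continuous Bu) (hBu0 : Bu 0 = 0)
    (hBupos : ∀ u : Fin m → ℝ, u ≠ 0 → 0 < Bu u)
    (hBuru : Filter.Tendsto Bu (Filter.cocompact _) Filter.atTop)
    (hshift : ∀ (u : Fin N → Fin m → ℝ) (x : Fin n → ℝ),
      mpcCost A B Q R P ε Bx Bu (shiftOp kf u x) (A.mulVec x + B.mulVec (u 0)) -
          mpcCost A B Q R P ε Bx Bu u x ≤ -(stageCost Q R ε Bx Bu x (u 0)))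
    (hopt : ∀ (u : Fin N → Fin m → ℝ) (x : Fin n → ℝ),
      mpcCost A B Q R P ε Bx Bu (Ψo u x) x - mpcCost A B Q R P ε Bx Bu u x ≤ -(γ u x))
    (hγnonneg : ∀ (u : Fin N → Fin m → ℝ) (x : Fin n → ℝ), 0 ≤ γ u x)
    (hPucsymm : Puc.IsSymm) (hPucpsd : ∀ x : Fin n → ℝ, 0 ≤ x ⬝ᵥ Puc.mulVec x)
    (hDARE : Puc = Aᵀ * Puc * A -
      Aᵀ * Puc * B * (R + Bᵀ * Puc * B)⁻¹ * Bᵀ * Puc * A + Q)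
    (hconv : Filter.Tendsto (fun k => cloop A B kf Ψo iT U0 x0 k)
      Filter.atTop (nhds (0, 0))) :
    ∀ αhat : ℕ → ℝ,
      (∀ k : ℕ, αhat k =
        mpcCost A B Q R P ε Bx Bu (cloop A B kf Ψo iT U0 x0 k).1
            (cloop A B kf Ψo iT U0 x0 k).2 -
          (cloop A B kf Ψo iT U0 x0 k).2 ⬝ᵥ Puc.mulVec (cloop A B kf Ψo iT U0 x0 k).2) →
    ∀ zx : Fin qx → ℕ → ℝ,
      (∀ i k, zx i k = sSup {t : ℝ | ∃ ξ : Fin n → ℝ,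
        ε * Bx ξ ≤ αhat k ∧ t = Cx.mulVec ξ i - dx i}) →
    ∀ zu : Fin qu → ℕ → ℝ,
      (∀ j k, zu j k = sSup {t : ℝ | ∃ v : Fin m → ℝ,
        ε * Bu v ≤ αhat k ∧ t = Cu.mulVec v j - du j}) →
    (∀ (k : ℕ) (i : Fin qx) (j : Fin qu),
      Cx.mulVec (cloop A B kf Ψo iT U0 x0 k).2 i ≤ dx i + zx i k ∧
      Cu.mulVec ((cloop A B kf Ψo iT U0 x0 k).1 0) j ≤ du j + zu j k) ∧
    (∀ (k : ℕ) (i : Fin qx) (j : Fin qu),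
      zx i (k + 1) ≤ zx i k ∧ zu j (k + 1) ≤ zu j k) ∧
    (∃ k0 : ℕ, ∀ k : ℕ, k0 ≤ k →
      (∀ i : Fin qx, zx i k ≤ 0) ∧ (∀ j : Fin qu, zu j k ≤ 0)) := by
  intro αhat hα zx hzx zu hzu
  -- abbreviations
  set T := cloop A B kf Ψo iT U0 x0 with hT
  have hx1 : ∀ k, (T (k + 1)).2 = A.mulVec (T k).2 + B.mulVec ((T k).1 0) := fun k => rfl
  have hU1 : ∀ k, (T (k + 1)).1 = PhiIter A B kf Ψo (iT k) (T k).1 (T k).2 := fun k => rfl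
  -- step decrease of the cost
  have hstep : ∀ k, mpcCost A B Q R P ε Bx Bu (T (k + 1)).1 (T (k + 1)).2 ≤
      mpcCost A B Q R P ε Bx Bu (T k).1 (T k).2 -
        stageCost Q R ε Bx Bu (T k).2 ((T k).1 0) := by
    intro k
    have hiter : ∀ i, mpcCost A B Q R P ε Bx Bu (PhiIter A B kf Ψo i (T k).1 (T k).2)
        (A.mulVec (T k).2 + B.mulVec ((T k).1 0)) ≤
        mpcCost A B Q R P ε Bx Bu (shiftOp kf (T k).1 (T k).2)
        (A.mulVec (T k).2 + B.mulVec ((T k).1 0)) := by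
      intro i
      induction i with
      | zero => exact le_refl _
      | succ i ih =>
        have h1 := hopt (PhiIter A B kf Ψo i (T k).1 (T k).2)
          (A.mulVec (T k).2 + B.mulVec ((T k).1 0))
        have h2 := hγnonneg (PhiIter A B kf Ψo i (T k).1 (T k).2)
          (A.mulVec (T k).2 + B.mulVec ((T k).1 0))
        show mpcCost A B Q R P ε Bx Bu (Ψo (PhiIter A B kf Ψo i (T k).1 (T k).2)
          (A.mulVec (T k).2 + B.mulVec ((T k).1 0)))
          (A.mulVec (T k).2 + B.mulVec ((T k).1 0)) ≤ _
        linarith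
    have h3 := hiter (iT k)
    have h4 := hshift (T k).1 (T k).2
    rw [hU1 k, hx1 k]
    linarith
  -- stage cost facts
  have hsc := fun (x : Fin n → ℝ) (u : Fin m → ℝ) =>
    myHelper.stage_nonneg hε hQpsd hRpd hBx0 hBxpos hBu0 hBupos x u
  -- key decrease of αhat
  have hdec : ∀ k, αhat (k + 1) + ε * Bx (T k).2 + ε * Bu ((T k).1 0) ≤ αhat k := by
    intro k
    have h1 := hstep k
    have h2 := myHelper.dare_step A B Q R Puc hRsymm hRpd hPucsymm hPucpsd hDARE
      (T k).2 ((T k).1 0)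
    have h3 := (hsc (T k).2 ((T k).1 0)).2.2.2
    rw [hα k, hα (k + 1), hx1 k]
    rw [hx1 k] at h1
    linarith [h1, h2]
  have hmono : ∀ k, αhat (k + 1) ≤ αhat k := by
    intro k
    have := hdec k
    have h1 := (hsc (T k).2 ((T k).1 0)).2.1
    have h2 := (hsc (T k).2 ((T k).1 0)).2.2.1
    linarith
  have hanti : Antitone αhat := antitone_nat_of_succ_le hmono
  -- αhat tends to 0
  have htend : Filter.Tendsto αhat Filter.atTop (nhds 0) := by
    have hc : Continuous fun p : (Fin N → Fin m → ℝ) × (Fin n → ℝ) =>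
        mpcCost A B Q R P ε Bx Bu p.1 p.2 - p.2 ⬝ᵥ Puc.mulVec p.2 :=
      (myHelper.continuous_mpcCost A B Q R P ε hBxcont hBucont).sub
        (myHelper.continuous_dot continuous_snd (myHelper.continuous_mulVec Puc continuous_snd))
    have h0 : mpcCost A B Q R P ε Bx Bu (0 : Fin N → Fin m → ℝ) (0 : Fin n → ℝ) -
        (0 : Fin n → ℝ) ⬝ᵥ Puc.mulVec 0 = 0 := by
      rw [myHelper.mpcCost_zero A B Q R P ε Bx Bu hBx0 hBu0]
      simp [Matrix.mulVec_zero]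
    have h1 := (hc.tendsto ((0 : Fin N → Fin m → ℝ), (0 : Fin n → ℝ))).comp hconv
    rw [h0] at h1
    exact h1.congr fun k => (hα k).symm
  have hα0 : ∀ k, 0 ≤ αhat k := by
    intro k
    refine le_of_tendsto htend ?_
    exact Filter.eventually_atTop.mpr ⟨k, fun j hj => hanti hj⟩
  have hBxbound : ∀ k, ε * Bx ((T k).2) ≤ αhat k := by
    intro k
    have := hdec k
    have h1 := hα0 (k + 1)
    have h2 := (hsc (T k).2 ((T k).1 0)).2.2.1
    linarith
  have hBubound : ∀ k, ε * Bu ((T k).1 0) ≤ αhat k := by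
    intro k
    have := hdec k
    have h1 := hα0 (k + 1)
    have h2 := (hsc (T k).2 ((T k).1 0)).2.1
    linarith
  -- compactness of sublevel sets
  have hcompX : ∀ c : ℝ, IsCompact {ξ : Fin n → ℝ | ε * Bx ξ ≤ c} := fun c =>
    myHelper.sublevel_compact (continuous_const.mul hBxcont)
      (Filter.Tendsto.const_mul_atTop hε hBxru) c
  have hcompU : ∀ c : ℝ, IsCompact {v : Fin m → ℝ | ε * Bu v ≤ c} := fun c =>
    myHelper.sublevel_compact (continuous_const.mul hBucont)
      (Filter.Tendsto.const_mul_atTop hε hBuru) c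
  have hgxcont : ∀ i : Fin qx, Continuous fun ξ : Fin n → ℝ => Cx.mulVec ξ i - dx i :=
    fun i => (((continuous_apply i).comp
      (myHelper.continuous_mulVec Cx continuous_id))).sub continuous_const
  have hgucont : ∀ j : Fin qu, Continuous fun v : Fin m → ℝ => Cu.mulVec v j - du j :=
    fun j => (((continuous_apply j).comp
      (myHelper.continuous_mulVec Cu continuous_id))).sub continuous_const
  -- the violation sets
  have hSx_eq : ∀ (i : Fin qx) (k : ℕ),
      {t : ℝ | ∃ ξ : Fin n → ℝ, ε * Bx ξ ≤ αhat k ∧ t = Cx.mulVec ξ i - dx i} =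
      (fun ξ : Fin n → ℝ => Cx.mulVec ξ i - dx i) '' {ξ | ε * Bx ξ ≤ αhat k} := by
    intro i k
    ext t
    constructor
    · rintro ⟨ξ, h1, rfl⟩; exact ⟨ξ, h1, rfl⟩
    · rintro ⟨ξ, h1, rfl⟩; exact ⟨ξ, h1, rfl⟩
  have hSu_eq : ∀ (j : Fin qu) (k : ℕ),
      {t : ℝ | ∃ v : Fin m → ℝ, ε * Bu v ≤ αhat k ∧ t = Cu.mulVec v j - du j} =
      (fun v : Fin m → ℝ => Cu.mulVec v j - du j) '' {v | ε * Bu v ≤ αhat k} := by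
    intro j k
    ext t
    constructor
    · rintro ⟨v, h1, rfl⟩; exact ⟨v, h1, rfl⟩
    · rintro ⟨v, h1, rfl⟩; exact ⟨v, h1, rfl⟩
  have hSx_bdd : ∀ (i : Fin qx) (k : ℕ), BddAbove
      {t : ℝ | ∃ ξ : Fin n → ℝ, ε * Bx ξ ≤ αhat k ∧ t = Cx.mulVec ξ i - dx i} := by
    intro i k
    rw [hSx_eq i k]
    exact ((hcompX (αhat k)).image (hgxcont i)).bddAbove
  have hSu_bdd : ∀ (j : Fin qu) (k : ℕ), BddAbove
      {t : ℝ | ∃ v : Fin m → ℝ, ε * Bu v ≤ αhat k ∧ t = Cu.mulVec v j - du j} := by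
    intro j k
    rw [hSu_eq j k]
    exact ((hcompU (αhat k)).image (hgucont j)).bddAbove
  have hSx_ne : ∀ (i : Fin qx) (k : ℕ),
      Set.Nonempty {t : ℝ | ∃ ξ : Fin n → ℝ, ε * Bx ξ ≤ αhat k ∧ t = Cx.mulVec ξ i - dx i} :=
    fun i k => ⟨Cx.mulVec 0 i - dx i, 0, by simp [hBx0, hα0 k], rfl⟩
  have hSu_ne : ∀ (j : Fin qu) (k : ℕ),
      Set.Nonempty {t : ℝ | ∃ v : Fin m → ℝ, ε * Bu v ≤ αhat k ∧ t = Cu.mulVec v j - du j} :=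
    fun j k => ⟨Cu.mulVec 0 j - du j, 0, by simp [hBu0, hα0 k], rfl⟩
  refine ⟨?parta, ?partb, ?partc⟩
  case parta =>
    intro k i j
    constructor
    · have hmem : Cx.mulVec (T k).2 i - dx i ∈
          {t : ℝ | ∃ ξ : Fin n → ℝ, ε * Bx ξ ≤ αhat k ∧ t = Cx.mulVec ξ i - dx i} :=
        ⟨(T k).2, hBxbound k, rfl⟩
      have := le_csSup (hSx_bdd i k) hmem
      rw [← hzx i k] at this
      linarith
    · have hmem : Cu.mulVec ((T k).1 0) j - du j ∈
          {t : ℝ | ∃ v : Fin m → ℝ, ε * Bu v ≤ αhat k ∧ t = Cu.mulVec v j - du j} :=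
        ⟨(T k).1 0, hBubound k, rfl⟩
      have := le_csSup (hSu_bdd j k) hmem
      rw [← hzu j k] at this
      linarith
  case partb =>
    intro k i j
    constructor
    · rw [hzx i (k + 1), hzx i k]
      refine csSup_le_csSup (hSx_bdd i k) (hSx_ne i (k + 1)) ?_
      rintro t ⟨ξ, h1, rfl⟩
      exact ⟨ξ, h1.trans (hmono k), rfl⟩
    · rw [hzu j (k + 1), hzu j k]
      refine csSup_le_csSup (hSu_bdd j k) (hSu_ne j (k + 1)) ?_
      rintro t ⟨v, h1, rfl⟩
      exact ⟨v, h1.trans (hmono k), rfl⟩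
  case partc =>
    -- small sublevel sets give no violation
    have hkey_x : ∀ i : Fin qx, ∃ δ > 0, ∀ ξ : Fin n → ℝ,
        ε * Bx ξ ≤ δ → Cx.mulVec ξ i ≤ dx i := by
      intro i
      set F : Set (Fin n → ℝ) := {ξ | ε * Bx ξ ≤ ε ∧ dx i ≤ Cx.mulVec ξ i} with hF
      have hFcomp : IsCompact F := by
        refine (hcompX ε).of_isClosed_subset ?_ ?_
        · exact (isClosed_le (continuous_const.mul hBxcont) continuous_const).inter
            (isClosed_le continuous_const ((continuous_apply i).comp
              (myHelper.continuous_mulVec Cx continuous_id)))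
        · intro ξ hξ; exact hξ.1
      by_cases hFne : F.Nonempty
      · obtain ⟨ξ₀, hξ₀F, hξ₀min⟩ := hFcomp.exists_isMinOn hFne
          ((continuous_const.mul hBxcont).continuousOn)
        have hξ₀ne : ξ₀ ≠ 0 := by
          rintro rfl
          have := hξ₀F.2
          simp [Matrix.mulVec_zero] at this
          linarith [hdx i]
        have hpos : 0 < ε * Bx ξ₀ := mul_pos hε (hBxpos ξ₀ hξ₀ne)
        refine ⟨min ε (ε * Bx ξ₀) / 2, by positivity, ?_⟩
        intro ξ hξ
        by_contra hb
        push_neg at hb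
        have hξF : ξ ∈ F := by
          constructor
          · have h4 := min_le_left ε (ε * Bx ξ₀)
            calc ε * Bx ξ ≤ min ε (ε * Bx ξ₀) / 2 := hξ
              _ ≤ ε := by linarith
          · exact hb.le
        have hmin2 : ε * Bx ξ₀ ≤ ε * Bx ξ := hξ₀min hξF
        have h5 : min ε (ε * Bx ξ₀) / 2 < ε * Bx ξ₀ := by
          have := min_le_right ε (ε * Bx ξ₀)
          linarith
        linarith
      · refine ⟨ε, hε, ?_⟩
        intro ξ hξ
        by_contra hb
        push_neg at hb
        exact hFne ⟨ξ, hξ, hb.le⟩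
    have hkey_u : ∀ j : Fin qu, ∃ δ > 0, ∀ v : Fin m → ℝ,
        ε * Bu v ≤ δ → Cu.mulVec v j ≤ du j := by
      intro j
      set F : Set (Fin m → ℝ) := {v | ε * Bu v ≤ ε ∧ du j ≤ Cu.mulVec v j} with hF
      have hFcomp : IsCompact F := by
        refine (hcompU ε).of_isClosed_subset ?_ ?_
        · exact (isClosed_le (continuous_const.mul hBucont) continuous_const).inter
            (isClosed_le continuous_const ((continuous_apply j).comp
              (myHelper.continuous_mulVec Cu continuous_id)))
        · intro v hv; exact hv.1
      by_cases hFne : F.Nonempty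
      · obtain ⟨v₀, hv₀F, hv₀min⟩ := hFcomp.exists_isMinOn hFne
          ((continuous_const.mul hBucont).continuousOn)
        have hv₀ne : v₀ ≠ 0 := by
          rintro rfl
          have := hv₀F.2
          simp [Matrix.mulVec_zero] at this
          linarith [hdu j]
        have hpos : 0 < ε * Bu v₀ := mul_pos hε (hBupos v₀ hv₀ne)
        refine ⟨min ε (ε * Bu v₀) / 2, by positivity, ?_⟩
        intro v hv
        by_contra hb
        push_neg at hb
        have hvF : v ∈ F := by
          constructor
          · have h4 := min_le_left ε (ε * Bu v₀)
            calc ε * Bu v ≤ min ε (ε * Bu v₀) / 2 := hv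
              _ ≤ ε := by linarith
          · exact hb.le
        have hmin2 : ε * Bu v₀ ≤ ε * Bu v := hv₀min hvF
        have h5 : min ε (ε * Bu v₀) / 2 < ε * Bu v₀ := by
          have := min_le_right ε (ε * Bu v₀)
          linarith
        linarith
      · refine ⟨ε, hε, ?_⟩
        intro v hv
        by_contra hb
        push_neg at hb
        exact hFne ⟨v, hv, hb.le⟩
    -- choose thresholds
    choose δx hδx hδx' using hkey_x
    choose δu hδu hδu' using hkey_u
    have hev : ∀ δ : ℝ, 0 < δ → ∃ k0 : ℕ, ∀ k ≥ k0, αhat k < δ := by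
      intro δ hδ
      exact Filter.eventually_atTop.mp (htend.eventually_lt_const hδ)
    choose kx hkx using fun i => hev (δx i) (hδx i)
    choose ku hku using fun j => hev (δu j) (hδu j)
    refine ⟨(Finset.univ.sup kx) ⊔ (Finset.univ.sup ku), ?_⟩
    intro k hk
    constructor
    · intro i
      rw [hzx i k]
      refine Real.sSup_le ?_ le_rfl
      rintro t ⟨ξ, h1, rfl⟩
      have hik : kx i ≤ k :=
        le_trans (le_trans (Finset.le_sup (Finset.mem_univ i)) le_sup_left) hk
      have h2 : αhat k < δx i := hkx i k hik
      have h3 := hδx' i ξ (h1.trans h2.le)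
      linarith
    · intro j
      rw [hzu j k]
      refine Real.sSup_le ?_ le_rfl
      rintro t ⟨v, h1, rfl⟩
      have hjk : ku j ≤ k :=
        le_trans (le_trans (Finset.le_sup (Finset.mem_univ j)) le_sup_right) hk
      have h2 : αhat k < δu j := hku j k hjk
      have h3 := hδu' j v (h1.trans h2.le)
      linarith
end

section
/- (Lemma A.1) Let P = {ξ ∈ ℝ^r : Cξ ≤ d} be a compact polytope with all dⁱ > 0, and let B̂_P be the recentered relaxed barrier function with relaxation parameter δ, with 0 < δ ≤ min_i dⁱ and nonnegative weights w satisfying the recentering condition Cᵀ·diag(1/d¹,…,1/d^q)·(𝟙+w) = 0 (so that B̂_P is convex and positive definite). Define β̄(δ) := min over i ∈ {1,…,q} and ξ of {B̂_P(ξ) : Cⁱξ = dⁱ}. Then: (a) β̄ is a continuous function of δ, and (b) the sublevel set S_B̂ = {ξ ∈ ℝ^r : B̂_P(ξ) ≤ β̄(δ)} is contained in P. -/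
open Matrix Real Set

/-- The relaxed logarithmic barrier function with relaxation parameter `δ`. -/
noncomputable def Bhat (δ z : ℝ) : ℝ :=
  if δ < z then -Real.log z
  else (1 / 2) * (((z - 2 * δ) / δ) ^ 2 - 1) - Real.log δ

/-- The recentered relaxed logarithmic barrier function for the polytope `{ξ : Cξ ≤ d}`. -/
noncomputable def BhatP {q r : ℕ} (δ : ℝ) (C : Matrix (Fin q) (Fin r) ℝ)
    (d w : Fin q → ℝ) (ξ : Fin r → ℝ) : ℝ :=
  ∑ i, (1 + w i) * (Bhat δ (-(C.mulVec ξ i) + d i) + Real.log (d i))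


-- key lower bound
lemma key_lb {δ D z : ℝ} (hδ : 0 < δ) (hδD : δ ≤ D) :
    1 - z / D ≤ Bhat δ z + Real.log D := by
  have hD : 0 < D := lt_of_lt_of_le hδ hδD
  have hlog : Real.log (δ / D) ≤ δ / D - 1 := Real.log_le_sub_one_of_pos (by positivity)
  rw [Real.log_div (ne_of_gt hδ) (ne_of_gt hD)] at hlog
  unfold Bhat
  split_ifs with h
  · -- z > δ, so z > 0 : log (z/D) ≤ z/D - 1
    have hz : 0 < z := lt_trans hδ h
    have h2 : Real.log (z / D) ≤ z / D - 1 := Real.log_le_sub_one_of_pos (by positivity)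
    rw [Real.log_div (ne_of_gt hz) (ne_of_gt hD)] at h2
    linarith
  · -- quadratic branch, z ≤ δ
    push_neg at h
    have hs : 1 ≤ (2 * δ - z) / δ := by
      rw [le_div_iff₀ hδ]; linarith
    set s := (2 * δ - z) / δ with hsdef
    have hzs : z = 2 * δ - s * δ := by rw [hsdef, div_mul_cancel₀ _ hδ.ne']; ring
    have h1 : δ * (s - 1) / D ≤ s - 1 := by
      rw [div_le_iff₀ hD]; nlinarith
    have hsq : ((z - 2*δ)/δ)^2 = s^2 := by
      rw [hzs]; field_simp; ring
    rw [hsq, hzs]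
    have : (2*δ - s*δ)/D = 2*(δ/D) - s*(δ/D) := by ring
    rw [this]
    have hδD' : δ / D ≤ 1 := (div_le_one hD).2 hδD
    nlinarith [sq_nonneg (s - 1), mul_pos hδ hD]

lemma key_lb_strict {δ D z : ℝ} (hδ : 0 < δ) (hδD : δ ≤ D) (hz : z ≤ 0) :
    3/2 - z / D ≤ Bhat δ z + Real.log D := by
  have hD : 0 < D := lt_of_lt_of_le hδ hδD
  have hlog : Real.log (δ / D) ≤ δ / D - 1 := Real.log_le_sub_one_of_pos (by positivity)
  rw [Real.log_div (ne_of_gt hδ) (ne_of_gt hD)] at hlog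
  unfold Bhat
  rw [if_neg (by linarith)]
  have hs : 2 ≤ (2 * δ - z) / δ := by
    rw [le_div_iff₀ hδ]; linarith
  set s := (2 * δ - z) / δ with hsdef
  have hzs : z = 2 * δ - s * δ := by rw [hsdef, div_mul_cancel₀ _ hδ.ne']; ring
  have h1 : δ * (s - 1) / D ≤ s - 1 := by
    rw [div_le_iff₀ hD]; nlinarith
  have hsq : ((z - 2*δ)/δ)^2 = s^2 := by
    rw [hzs]; field_simp; ring
  rw [hsq, hzs]
  have : (2*δ - s*δ)/D = 2*(δ/D) - s*(δ/D) := by ring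
  rw [this]
  have hδD' : δ / D ≤ 1 := (div_le_one hD).2 hδD
  nlinarith [mul_pos hδ hD]

lemma log_le_half {x : ℝ} (hx : 0 < x) : Real.log x ≤ x / 2 := by
  have h1 : Real.log (Real.sqrt x) ≤ Real.sqrt x - 1 :=
    Real.log_le_sub_one_of_pos (Real.sqrt_pos.2 hx)
  have h2 : Real.log (Real.sqrt x) = Real.log x / 2 := Real.log_sqrt hx.le
  have h3 : Real.sqrt x ^ 2 = x := Real.sq_sqrt hx.le
  nlinarith [Real.sqrt_nonneg x, sq_nonneg (Real.sqrt x - 2)]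

-- upper-tail bound: z > δ ⇒  z/(2D) - 1 ≤ Bhat δ z + log D - 1 + z/D
lemma key_tail {δ D z : ℝ} (hδ : 0 < δ) (hD : 0 < D) (h : δ < z) :
    z / (2*D) ≤ Bhat δ z + Real.log D - 1 + z / D + 1 := by
  have hz : 0 < z := lt_trans hδ h
  have h2 : Real.log (z / D) ≤ z / D / 2 := log_le_half (by positivity)
  rw [Real.log_div (ne_of_gt hz) (ne_of_gt hD)] at h2
  unfold Bhat
  rw [if_pos h]
  have : z / (2*D) = z/D - z/D/2 := by ring
  rw [this]; linarith

-- quadratic-tail bound: z ≤ 0 ⇒ z^2/(2δ^2) ≤ Bhat δ z + log D - 1 + z/D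
lemma key_quad_tail {δ D z : ℝ} (hδ : 0 < δ) (hδD : δ ≤ D) (hz : z ≤ 0) :
    z^2 / (2*δ^2) ≤ Bhat δ z + Real.log D - 1 + z / D := by
  have hD : 0 < D := lt_of_lt_of_le hδ hδD
  have hlog : Real.log (δ / D) ≤ δ / D - 1 := Real.log_le_sub_one_of_pos (by positivity)
  rw [Real.log_div (ne_of_gt hδ) (ne_of_gt hD)] at hlog
  unfold Bhat
  rw [if_neg (by linarith)]
  have e1 : (1:ℝ)/2 * (((z - 2*δ)/δ)^2 - 1) = (z-2*δ)^2/(2*δ^2) - 1/2 := by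
    field_simp
  rw [e1]
  have e2 : (z-2*δ)^2/(2*δ^2) - z^2/(2*δ^2) = 2 - 2*z/δ := by
    field_simp; ring
  have h3 : z / D - 2*z/δ ≥ 0 := by
    have h4 : z/D ≥ 2*z/δ := by
      rw [ge_iff_le, div_le_div_iff₀ hδ hD]; nlinarith
    linarith
  have hδD' : δ / D ≤ 1 := (div_le_one hD).2 hδD
  nlinarith

noncomputable def Bhat' (δ z : ℝ) : ℝ := if δ < z then -z⁻¹ else (z - 2*δ)/δ^2

lemma quad_hasDerivAt {δ : ℝ} (hδ : 0 < δ) (z : ℝ) :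
    HasDerivAt (fun z => (1:ℝ)/2 * (((z - 2*δ)/δ)^2 - 1) - Real.log δ) ((z - 2*δ)/δ^2) z := by
  have h : HasDerivAt (fun z : ℝ => (z - 2*δ)/δ) (1/δ) z := by
    simpa using ((hasDerivAt_id z).sub_const (2*δ)).div_const δ
  have h2 := (h.pow 2).sub_const 1
  have h3 := (h2.const_mul ((1:ℝ)/2)).sub_const (Real.log δ)
  have e : (1:ℝ)/2 * (((2:ℕ):ℝ) * ((z - 2*δ)/δ)^(2-1) * (1/δ)) = (z - 2*δ)/δ^2 := by
    have hδ' : (δ:ℝ) ≠ 0 := ne_of_gt hδ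
    rw [pow_one]
    push_cast
    field_simp
  exact e ▸ h3

lemma bhat_hasDerivAt {δ : ℝ} (hδ : 0 < δ) (z : ℝ) :
    HasDerivAt (Bhat δ) (Bhat' δ z) z := by
  rcases lt_trichotomy z δ with h | h | h
  · rw [Bhat', if_neg (by linarith)]
    refine (quad_hasDerivAt hδ z).congr_of_eventuallyEq ?_
    filter_upwards [Iio_mem_nhds h] with x hx
    rw [Bhat, if_neg (by simpa using le_of_lt hx)]
  · subst h
    rw [Bhat', if_neg (lt_irrefl z)]
    have hlog : HasDerivAt (fun x => -Real.log x) (-z⁻¹) z :=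
      (Real.hasDerivAt_log (ne_of_gt hδ)).neg
    have hIic : HasDerivWithinAt (Bhat z) ((z - 2*z)/z^2) (Iic z) z := by
      refine ((quad_hasDerivAt hδ z).hasDerivWithinAt).congr ?_ ?_
      · intro x hx; rw [Bhat, if_neg (not_lt.2 hx)]
      · rw [Bhat, if_neg (lt_irrefl z)]
    have hIci : HasDerivWithinAt (Bhat z) ((z - 2*z)/z^2) (Ici z) z := by
      have he : (z - 2*z)/z^2 = -z⁻¹ := by field_simp; ring
      rw [he]
      refine (hlog.hasDerivWithinAt).congr ?_ ?_
      · intro x hx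
        rcases eq_or_lt_of_le (mem_Ici.1 hx) with h | h
        · rw [Bhat, if_neg (by rw [← h]; exact lt_irrefl z), ← h]
          have hm : (z - 2*z)/z = -1 := by field_simp; ring
          rw [hm]; norm_num
        · rw [Bhat, if_pos h]
      · rw [Bhat, if_neg (lt_irrefl z)]
        have hm : (z - 2*z)/z = -1 := by field_simp; ring
        rw [hm]; norm_num
    have := hIic.union hIci
    rwa [Iic_union_Ici, hasDerivWithinAt_univ] at this
  · rw [Bhat', if_pos h]
    refine ((Real.hasDerivAt_log (ne_of_gt (lt_trans hδ h))).neg).congr_of_eventuallyEq ?_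
    filter_upwards [Ioi_mem_nhds h] with x hx
    rw [Bhat, if_pos (mem_Ioi.1 hx)]; rfl

lemma bhat'_monotone {δ : ℝ} (hδ : 0 < δ) : Monotone (Bhat' δ) := by
  intro a b hab
  unfold Bhat'
  split_ifs with h1 h2 h2
  · rw [neg_le_neg_iff]
    exact inv_anti₀ (lt_trans hδ h1) hab
  · exact absurd (lt_of_lt_of_le h1 hab) h2
  · push_neg at h1
    have hb : 0 < b := lt_trans hδ h2
    have : (a - 2*δ)/δ^2 ≤ -δ⁻¹ := by
      rw [div_le_iff₀ (by positivity : (0:ℝ) < δ^2)]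
      have he : -δ⁻¹ * δ^2 = -δ := by field_simp
      rw [he]; linarith
    have h4 : -δ⁻¹ ≤ -b⁻¹ := by
      rw [neg_le_neg_iff]
      exact inv_anti₀ hδ h2.le
    linarith
  · rw [div_le_div_iff_of_pos_right (by positivity : (0:ℝ) < δ^2)]
    linarith
    
lemma bhat_convexOn {δ : ℝ} (hδ : 0 < δ) : ConvexOn ℝ Set.univ (Bhat δ) := by
  have hdiff : Differentiable ℝ (Bhat δ) := fun z => (bhat_hasDerivAt hδ z).differentiableAt
  have hderiv : deriv (Bhat δ) = Bhat' δ := funext fun z => (bhat_hasDerivAt hδ z).deriv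
  exact Monotone.convexOn_univ_of_deriv hdiff (hderiv ▸ bhat'_monotone hδ)

lemma bhat_at_D {δ D : ℝ} (hδ : 0 < δ) (hδD : δ ≤ D) : Bhat δ D = -Real.log D := by
  unfold Bhat
  split_ifs with h
  · rfl
  · push_neg at h
    have : δ = D := le_antisymm hδD h
    subst this
    have : (δ - 2*δ)/δ = -1 := by field_simp; ring
    rw [this]; norm_num

noncomputable def sigma (δ D z : ℝ) : ℝ := Bhat δ z + Real.log D - 1 + z / D

lemma sigma_nonneg {δ D z : ℝ} (hδ : 0 < δ) (hδD : δ ≤ D) : 0 ≤ sigma δ D z := by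
  have := key_lb (z := z) hδ hδD; unfold sigma; linarith

lemma sigma_half {δ D z : ℝ} (hδ : 0 < δ) (hδD : δ ≤ D) (hz : z ≤ 0) : 1/2 ≤ sigma δ D z := by
  have := key_lb_strict (z := z) hδ hδD hz; unfold sigma; linarith

lemma lin_zero {q r : ℕ} (C : Matrix (Fin q) (Fin r) ℝ) (d w : Fin q → ℝ)
    (h : Cᵀ.mulVec (fun i => (1 / d i) * (1 + w i)) = 0) (ξ : Fin r → ℝ) :
    ∑ i, (1 + w i) * (C.mulVec ξ i / d i) = 0 := by
  have h2 : ∀ j, ∑ i, C i j * ((1 / d i) * (1 + w i)) = 0 := by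
    intro j
    have := congrFun h j
    simpa [Matrix.mulVec, dotProduct, Matrix.transpose_apply] using this
  calc ∑ i, (1 + w i) * (C.mulVec ξ i / d i)
      = ∑ i, ∑ j, C i j * ((1 / d i) * (1 + w i)) * ξ j := by
        refine Finset.sum_congr rfl fun i _ => ?_
        simp only [Matrix.mulVec, dotProduct]
        rw [Finset.sum_div, Finset.mul_sum]
        refine Finset.sum_congr rfl fun j _ => ?_
        ring
    _ = ∑ j, (∑ i, C i j * ((1 / d i) * (1 + w i))) * ξ j := by
        rw [Finset.sum_comm]
        simp [Finset.sum_mul]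
    _ = 0 := by
        simp only [one_div] at h2
        simp [h2]

lemma BhatP_decomp {q r : ℕ} {δ : ℝ} (C : Matrix (Fin q) (Fin r) ℝ) {d : Fin q → ℝ} (w : Fin q → ℝ)
    (hd : ∀ i, 0 < d i)
    (hrec : Cᵀ.mulVec (fun i => (1 / d i) * (1 + w i)) = 0) (ξ : Fin r → ℝ) :
    BhatP δ C d w ξ = ∑ i, (1 + w i) * sigma δ (d i) (-(C.mulVec ξ i) + d i) := by
  have hz := lin_zero C d w hrec ξ
  unfold BhatP sigma
  rw [← sub_eq_zero]
  rw [← Finset.sum_sub_distrib]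
  rw [← hz]
  refine Finset.sum_congr rfl fun i _ => ?_
  have hdi := (hd i).ne'
  field_simp
  ring

lemma BhatP_nonneg {q r : ℕ} {δ : ℝ} (C : Matrix (Fin q) (Fin r) ℝ) {d w : Fin q → ℝ}
    (hd : ∀ i, 0 < d i) (hw : ∀ i, 0 ≤ w i) (hδ : 0 < δ) (hδd : ∀ i, δ ≤ d i)
    (hrec : Cᵀ.mulVec (fun i => (1 / d i) * (1 + w i)) = 0) (ξ : Fin r → ℝ) :
    0 ≤ BhatP δ C d w ξ := by
  rw [BhatP_decomp C w hd hrec ξ]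
  refine Finset.sum_nonneg fun i _ => ?_
  exact mul_nonneg (by linarith [hw i]) (sigma_nonneg hδ (hδd i))

lemma BhatP_single_le {q r : ℕ} {δ : ℝ} (C : Matrix (Fin q) (Fin r) ℝ) {d w : Fin q → ℝ}
    (hd : ∀ i, 0 < d i) (hw : ∀ i, 0 ≤ w i) (hδ : 0 < δ) (hδd : ∀ i, δ ≤ d i)
    (hrec : Cᵀ.mulVec (fun i => (1 / d i) * (1 + w i)) = 0) (ξ : Fin r → ℝ) (j : Fin q) :
    sigma δ (d j) (-(C.mulVec ξ j) + d j) ≤ BhatP δ C d w ξ := by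
  rw [BhatP_decomp C w hd hrec ξ]
  have h1 : sigma δ (d j) (-(C.mulVec ξ j) + d j) ≤ (1 + w j) * sigma δ (d j) (-(C.mulVec ξ j) + d j) := by
    nlinarith [sigma_nonneg (z := -(C.mulVec ξ j) + d j) hδ (hδd j), hw j]
  refine le_trans h1 (Finset.single_le_sum (f := fun i => (1 + w i) * sigma δ (d i) (-(C.mulVec ξ i) + d i)) (fun i _ => ?_) (Finset.mem_univ j))
  exact mul_nonneg (by linarith [hw i]) (sigma_nonneg hδ (hδd i))

lemma BhatP_zero {q r : ℕ} {δ : ℝ} (C : Matrix (Fin q) (Fin r) ℝ) {d w : Fin q → ℝ}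
    (hd : ∀ i, 0 < d i) (hδ : 0 < δ) (hδd : ∀ i, δ ≤ d i) :
    BhatP δ C d w (0 : Fin r → ℝ) = 0 := by
  unfold BhatP
  refine Finset.sum_eq_zero fun i _ => ?_
  rw [Matrix.mulVec_zero]
  simp [bhat_at_D hδ (hδd i)]

lemma part_b {q r : ℕ} {δ : ℝ} (C : Matrix (Fin q) (Fin r) ℝ) {d w : Fin q → ℝ}
    (hd : ∀ i, 0 < d i) (hw : ∀ i, 0 ≤ w i) (hδ : 0 < δ) (hδd : ∀ i, δ ≤ d i)
    (hrec : Cᵀ.mulVec (fun i => (1 / d i) * (1 + w i)) = 0)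
    (ξ : Fin r → ℝ)
    (hle : BhatP δ C d w ξ ≤ sInf {t : ℝ | ∃ (i : Fin q) (ξ : Fin r → ℝ),
        C.mulVec ξ i = d i ∧ t = BhatP δ C d w ξ}) : C.mulVec ξ ≤ d := by
  set S := {t : ℝ | ∃ (i : Fin q) (ξ : Fin r → ℝ), C.mulVec ξ i = d i ∧ t = BhatP δ C d w ξ} with hS
  intro i0
  by_contra hcon
  push_neg at hcon
  set a := C.mulVec ξ i0 with ha
  have ha0 : 0 < a := lt_trans (hd i0) hcon
  set t := d i0 / a with ht
  have ht0 : 0 < t := div_pos (hd i0) ha0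
  have ht1 : t < 1 := (div_lt_one ha0).2 hcon
  set ξ' := t • ξ with hξ'
  have hCξ' : ∀ i, C.mulVec ξ' i = t * C.mulVec ξ i := by
    intro i
    rw [hξ', Matrix.mulVec_smul]
    simp
  have hbd : C.mulVec ξ' i0 = d i0 := by
    rw [hCξ' i0, ← ha, ht]
    field_simp
  have hmem : BhatP δ C d w ξ' ∈ S := ⟨i0, ξ', hbd, rfl⟩
  have hbdd : BddBelow S := by
    refine ⟨0, fun x hx => ?_⟩
    obtain ⟨i, ζ, _, rfl⟩ := hx
    exact BhatP_nonneg C hd hw hδ hδd hrec ζ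
  have hinf_le : sInf S ≤ BhatP δ C d w ξ' := csInf_le hbdd hmem
  -- convexity step
  have h0 : BhatP δ C d w (0 : Fin r → ℝ) = 0 := BhatP_zero C hd hδ hδd
  have hconv : BhatP δ C d w ξ' ≤ t * BhatP δ C d w ξ := by
    have hmain : BhatP δ C d w ξ' ≤ t * BhatP δ C d w ξ + (1 - t) * BhatP δ C d w (0 : Fin r → ℝ) := by
      unfold BhatP
      rw [Finset.mul_sum, Finset.mul_sum, ← Finset.sum_add_distrib]
      refine Finset.sum_le_sum fun i _ => ?_
      have hz : -(C.mulVec ξ' i) + d i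
          = t * (-(C.mulVec ξ i) + d i) + (1 - t) * (-(C.mulVec (0 : Fin r → ℝ) i) + d i) := by
        rw [hCξ' i, Matrix.mulVec_zero]
        simp only [Pi.zero_apply]
        ring
      have hcx := (bhat_convexOn hδ).2 (Set.mem_univ (-(C.mulVec ξ i) + d i))
        (Set.mem_univ (-(C.mulVec (0 : Fin r → ℝ) i) + d i)) (le_of_lt ht0)
        (by linarith : (0:ℝ) ≤ 1 - t) (by ring : t + (1 - t) = 1)
      rw [smul_eq_mul, smul_eq_mul, smul_eq_mul, smul_eq_mul] at hcx
      rw [hz]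
      nlinarith [hw i, hcx]
    rw [h0] at hmain
    linarith
  have hchain : BhatP δ C d w ξ ≤ BhatP δ C d w ξ' := le_trans hle hinf_le
  have hneg : BhatP δ C d w ξ' ≤ 0 := by nlinarith
  have hzero : -(C.mulVec ξ' i0) + d i0 = 0 := by rw [hbd]; ring
  have hhalf : (1:ℝ)/2 ≤ BhatP δ C d w ξ' := by
    have := BhatP_single_le C hd hw hδ hδd hrec ξ' i0
    rw [hzero] at this
    have h2 := sigma_half (z := (0:ℝ)) hδ (hδd i0) le_rfl
    linarith
  linarith

lemma quad_cont : ContinuousOn (fun p : ℝ × ℝ => (1:ℝ)/2 * (((p.2 - 2*p.1)/p.1)^2 - 1) - Real.log p.1)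
    {p : ℝ × ℝ | 0 < p.1} := by
  refine ContinuousOn.sub ?_ ?_
  · refine ContinuousOn.mul continuousOn_const (ContinuousOn.sub ?_ continuousOn_const)
    refine ContinuousOn.pow ?_ 2
    exact ContinuousOn.div (by fun_prop) continuousOn_fst (fun p hp => ne_of_gt hp)
  · exact Real.continuousOn_log.comp continuousOn_fst (fun p hp => ne_of_gt hp)

lemma bhat_joint_cont : ContinuousOn (fun p : ℝ × ℝ => Bhat p.1 p.2) {p : ℝ × ℝ | 0 < p.1} := by
  intro p hp
  simp only [Set.mem_setOf_eq] at hp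
  set U : Set (ℝ × ℝ) := {p | 0 < p.1} with hU
  rcases lt_trichotomy p.2 p.1 with h | h | h
  · -- quadratic region: {p | p.2 < p.1} open nbhd
    have hopen : IsOpen {x : ℝ × ℝ | x.2 < x.1} := isOpen_lt continuous_snd continuous_fst
    have hmem : {x : ℝ × ℝ | x.2 < x.1} ∈ nhds p := hopen.mem_nhds h
    have hopen' : IsOpen U := isOpen_lt continuous_const continuous_fst
    have hq : ContinuousAt (fun p : ℝ × ℝ => (1:ℝ)/2 * (((p.2 - 2*p.1)/p.1)^2 - 1) - Real.log p.1) p :=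
      quad_cont.continuousAt (hopen'.mem_nhds hp)
    refine (hq.congr ?_).continuousWithinAt
    filter_upwards [hmem] with x hx
    simp only [Bhat]
    rw [if_neg (not_lt.2 (le_of_lt hx))]
  · -- boundary: union trick
    have hA : ContinuousWithinAt (fun p : ℝ × ℝ => Bhat p.1 p.2) (U ∩ {x | x.2 ≤ x.1}) p := by
      refine ContinuousWithinAt.congr ((quad_cont p hp).mono Set.inter_subset_left) ?_ ?_
      · intro x hx
        simp only [Bhat]; rw [if_neg (not_lt.2 hx.2)]
      · simp only [Bhat]; rw [if_neg (not_lt.2 (le_of_eq h))]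
    have hB : ContinuousWithinAt (fun p : ℝ × ℝ => Bhat p.1 p.2) (U ∩ {x | x.1 ≤ x.2}) p := by
      have hlog : ContinuousWithinAt (fun x : ℝ × ℝ => -Real.log x.2) (U ∩ {x | x.1 ≤ x.2}) p := by
        refine ContinuousWithinAt.neg ?_
        refine (Real.continuousOn_log.comp continuousOn_snd ?_) p ⟨hp, h.ge⟩
        intro x hx
        have : 0 < x.2 := lt_of_lt_of_le hx.1 hx.2
        exact ne_of_gt this
      refine hlog.congr ?_ ?_
      · intro x hx
        have hx2 : x.1 ≤ x.2 := hx.2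
        rcases eq_or_lt_of_le hx2 with he | hlt
        · rw [← he, bhat_at_D hx.1 le_rfl]
        · simp only [Bhat]; rw [if_pos hlt]
      · show Bhat p.1 p.2 = -Real.log p.2
        rw [h]
        exact bhat_at_D hp le_rfl
    have := hA.union hB
    refine this.mono fun x hx => ?_
    rcases le_total x.2 x.1 with hle | hle
    · exact Or.inl ⟨hx, hle⟩
    · exact Or.inr ⟨hx, hle⟩
  · -- log region
    have hopen : IsOpen {x : ℝ × ℝ | x.1 < x.2} := isOpen_lt continuous_fst continuous_snd
    have hz : 0 < p.2 := lt_trans hp h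
    have hlog : ContinuousAt (fun x : ℝ × ℝ => -Real.log x.2) p := by
      have : ContinuousAt Real.log p.2 := Real.continuousAt_log (ne_of_gt hz)
      exact (this.comp continuousAt_snd).neg
    refine (hlog.congr ?_).continuousWithinAt
    filter_upwards [hopen.mem_nhds h] with x hx
    simp only [Bhat]; rw [if_pos hx]

lemma BhatP_joint_cont {q r : ℕ} (C : Matrix (Fin q) (Fin r) ℝ) (d w : Fin q → ℝ) :
    ContinuousOn (fun p : ℝ × (Fin r → ℝ) => BhatP p.1 C d w p.2) {p | 0 < p.1} := by
  unfold BhatP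
  refine continuousOn_finset_sum _ fun i _ => ?_
  refine ContinuousOn.mul continuousOn_const (ContinuousOn.add ?_ continuousOn_const)
  have hmv : Continuous (fun ξ : Fin r → ℝ => C.mulVec ξ i) := by
    simp only [Matrix.mulVec, dotProduct]
    exact continuous_finset_sum _ fun j _ => continuous_const.mul (continuous_apply j)
  have hφ : Continuous (fun p : ℝ × (Fin r → ℝ) => (p.1, -(C.mulVec p.2 i) + d i)) :=
    continuous_fst.prodMk (((hmv.comp continuous_snd).neg).add continuous_const)
  exact bhat_joint_cont.comp hφ.continuousOn (fun p hp => hp)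

lemma cont_inf {X : Type*} [MetricSpace X] {T : Set X} (hT : IsCompact T) (hne : T.Nonempty)
    {a b : ℝ} {g : ℝ → X → ℝ}
    (hg : ContinuousOn (fun p : ℝ × X => g p.1 p.2) (Set.Icc a b ×ˢ T)) :
    ContinuousOn (fun δ => sInf ((g δ) '' T)) (Set.Icc a b) := by
  have hcomp : IsCompact (Set.Icc a b ×ˢ T) := (isCompact_Icc).prod hT
  have huc := hcomp.uniformContinuousOn_of_continuous hg
  rw [Metric.uniformContinuousOn_iff] at huc
  intro δ0 hδ0
  have hslice : ∀ δ ∈ Set.Icc a b, ContinuousOn (g δ) T := by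
    intro δ hδ
    exact hg.comp ((continuous_const.prodMk continuous_id).continuousOn)
      (fun x hx => ⟨hδ, hx⟩)
  have hmin : ∀ δ ∈ Set.Icc a b, ∃ x ∈ T, sInf ((g δ) '' T) = g δ x ∧ ∀ y ∈ T, g δ x ≤ g δ y := by
    intro δ hδ
    obtain ⟨x, hx, hmin⟩ := hT.exists_isMinOn hne (hslice δ hδ)
    refine ⟨x, hx, ?_, fun y hy => hmin hy⟩
    refine IsLeast.csInf_eq ⟨Set.mem_image_of_mem _ hx, ?_⟩
    rintro t ⟨y, hy, rfl⟩
    exact hmin hy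
  rw [Metric.continuousWithinAt_iff]
  intro ε hε
  obtain ⟨η, hη, hust⟩ := huc ε hε
  refine ⟨η, hη, fun δ hδ hdist => ?_⟩
  have key : ∀ x ∈ T, dist (g δ x) (g δ0 x) < ε := by
    intro x hx
    apply hust (δ, x) ⟨hδ, hx⟩ (δ0, x) ⟨hδ0, hx⟩
    rw [Prod.dist_eq]
    simp only [dist_self]
    exact max_lt hdist hη
  obtain ⟨x1, hx1, he1, hm1⟩ := hmin δ hδ
  obtain ⟨x0, hx0, he0, hm0⟩ := hmin δ0 hδ0
  rw [he1, he0, Real.dist_eq, abs_sub_lt_iff]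
  have k1 := key x1 hx1
  have k0 := key x0 hx0
  rw [Real.dist_eq, abs_sub_lt_iff] at k1 k0
  constructor
  · have := hm1 x0 hx0
    linarith [k0.1, k0.2]
  · have := hm0 x1 hx1
    linarith [k1.1, k1.2]

lemma C_inj {q r : ℕ} (C : Matrix (Fin q) (Fin r) ℝ) {d : Fin q → ℝ} (hd : ∀ i, 0 < d i)
    (hcompact : IsCompact {ξ : Fin r → ℝ | C.mulVec ξ ≤ d}) :
    ∀ v : Fin r → ℝ, C.mulVec v = 0 → v = 0 := by
  intro v hv
  by_contra hne
  have hnorm : 0 < ‖v‖ := norm_pos_iff.2 hne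
  obtain ⟨R, hR⟩ := hcompact.isBounded.exists_norm_le
  have hmem : ∀ t : ℝ, (t • v) ∈ {ξ : Fin r → ℝ | C.mulVec ξ ≤ d} := by
    intro t
    simp only [Set.mem_setOf_eq]
    intro i
    rw [Matrix.mulVec_smul, hv]
    simpa using (hd i).le
  have hR0 : (0:ℝ) ≤ R := by
    have := hR _ (hmem 0)
    simp at this
    linarith [norm_nonneg ((0:ℝ) • v)]
  have h1 := hR _ (hmem ((R + 1) / ‖v‖))
  rw [norm_smul] at h1
  rw [Real.norm_eq_abs, abs_div, abs_of_nonneg (by linarith : (0:ℝ) ≤ R + 1), abs_of_pos hnorm] at h1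
  rw [div_mul_cancel₀ _ (ne_of_gt hnorm)] at h1
  linarith

lemma K_cpt {q r : ℕ} (C : Matrix (Fin q) (Fin r) ℝ) (d : Fin q → ℝ)
    (hinj : ∀ v : Fin r → ℝ, C.mulVec v = 0 → v = 0) (R : ℝ) :
    IsCompact {ξ : Fin r → ℝ | ∀ i, |d i - C.mulVec ξ i| ≤ R} := by
  have hker : LinearMap.ker C.mulVecLin = ⊥ := by
    rw [LinearMap.ker_eq_bot']
    intro v hv
    exact hinj v (by simpa [Matrix.mulVecLin_apply] using hv)
  obtain ⟨G, hG⟩ := LinearMap.exists_leftInverse_of_injective C.mulVecLin hker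
  have hGc : Continuous G := G.continuous_of_finiteDimensional
  have hbox : IsCompact (Set.Icc (fun i => d i - R) (fun i => d i + R) : Set (Fin q → ℝ)) :=
    isCompact_Icc
  have himg : IsCompact (G '' Set.Icc (fun i => d i - R) (fun i => d i + R)) :=
    hbox.image hGc
  refine IsCompact.of_isClosed_subset himg ?_ ?_
  · have : {ξ : Fin r → ℝ | ∀ i, |d i - C.mulVec ξ i| ≤ R}
        = ⋂ i, {ξ : Fin r → ℝ | |d i - C.mulVec ξ i| ≤ R} := by
      ext ξ; simp [Set.mem_iInter]
    rw [this]
    refine isClosed_iInter fun i => ?_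
    have hmv : Continuous (fun ξ : Fin r → ℝ => |d i - C.mulVec ξ i|) := by
      have : Continuous (fun ξ : Fin r → ℝ => C.mulVec ξ i) := by
        simp only [Matrix.mulVec, dotProduct]
        exact continuous_finset_sum _ fun j _ => continuous_const.mul (continuous_apply j)
      exact (continuous_const.sub this).abs
    exact isClosed_le hmv continuous_const
  · intro ξ hξ
    refine ⟨C.mulVec ξ, ?_, ?_⟩
    · constructor
      · intro i
        have := hξ i
        rw [abs_le] at this
        simp only []
        linarith [this.1, this.2]
      · intro i
        have := hξ i
        rw [abs_le] at this
        simp only []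
        linarith [this.1, this.2]
    · have := congrArg (fun f => f ξ) hG
      simpa [Matrix.mulVecLin_apply] using this

set_option maxHeartbeats 1000000 in
/-- (Lemma A.1) For a compact polytope `P = {ξ : Cξ ≤ d}` and the recentered relaxed
barrier `B̂_P` with relaxation parameter `δ`, the boundary minimum
`β̄(δ) = min_{i,ξ} {B̂_P(ξ) : Cⁱξ = dⁱ}` is a continuous function of `δ` (on the set of
admissible relaxation parameters `0 < δ ≤ min_i dⁱ`), and the sublevel set
`{ξ : B̂_P(ξ) ≤ β̄(δ)}` is contained in `P`. -/
theorem barrier_boundary_value_continuous_and_sublevel_feasible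
    {q r : ℕ} (C : Matrix (Fin q) (Fin r) ℝ) (d w : Fin q → ℝ)
    (hd : ∀ i, 0 < d i) (hw : ∀ i, 0 ≤ w i)
    (hcompact : IsCompact {ξ : Fin r → ℝ | C.mulVec ξ ≤ d})
    (hrecenter : Cᵀ.mulVec (fun i => (1 / d i) * (1 + w i)) = 0) :
    ∀ betaBar : ℝ → ℝ,
      (∀ δ : ℝ, betaBar δ = sInf {t : ℝ | ∃ (i : Fin q) (ξ : Fin r → ℝ),
        C.mulVec ξ i = d i ∧ t = BhatP δ C d w ξ}) →
      ContinuousOn betaBar {δ : ℝ | 0 < δ ∧ ∀ i, δ ≤ d i} ∧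
      (∀ δ : ℝ, 0 < δ → (∀ i, δ ≤ d i) →
        ∀ ξ : Fin r → ℝ, BhatP δ C d w ξ ≤ betaBar δ → C.mulVec ξ ≤ d) := by
  intro betaBar hbb
  refine ⟨?_, ?_⟩
  swap
  · intro δ hpos hle ξ hξ
    rw [hbb δ] at hξ
    exact part_b C hd hw hpos hle hrecenter ξ hξ
  by_cases hex : ∃ (i : Fin q) (ξ0 : Fin r → ℝ), C.mulVec ξ0 i = d i
  swap
  · have hz : betaBar = fun _ => (0:ℝ) := by
      funext δ
      rw [hbb δ]
      have hempty : {t : ℝ | ∃ (i : Fin q) (ξ : Fin r → ℝ),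
          C.mulVec ξ i = d i ∧ t = BhatP δ C d w ξ} = ∅ := by
        rw [Set.eq_empty_iff_forall_notMem]
        rintro t ⟨i, ξ, hiξ, -⟩
        exact hex ⟨i, ξ, hiξ⟩
      rw [hempty, Real.sInf_empty]
    rw [hz]
    exact continuousOn_const
  obtain ⟨i0, ξ0, hξ0⟩ := hex
  haveI hq : Nonempty (Fin q) := ⟨i0⟩
  intro δ0 hδ0A
  obtain ⟨hδ0pos, hδ0le⟩ := hδ0A
  set b := Finset.univ.inf' Finset.univ_nonempty d with hbdef
  have hbled : ∀ i, b ≤ d i := fun i => Finset.inf'_le d (Finset.mem_univ i)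
  have hδ0b : δ0 ≤ b := Finset.le_inf' _ _ fun i _ => hδ0le i
  set a := δ0/2 with hadef
  have hapos : 0 < a := by positivity
  have haδ0 : a < δ0 := by rw [hadef]; linarith
  have hab : a ≤ b := by linarith
  have hbpos : 0 < b := lt_of_lt_of_le hapos hab
  have hIccA : ∀ δ ∈ Set.Icc a b, 0 < δ ∧ ∀ i, δ ≤ d i := by
    intro δ hδ
    exact ⟨lt_of_lt_of_le hapos hδ.1, fun i => le_trans hδ.2 (hbled i)⟩
  have hcont0 : ContinuousOn (fun δ => BhatP δ C d w ξ0) (Set.Icc a b) := by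
    have h1 : Continuous (fun δ : ℝ => (δ, ξ0)) := continuous_id.prodMk continuous_const
    exact (BhatP_joint_cont C d w).comp h1.continuousOn (fun δ hδ => (hIccA δ hδ).1)
  obtain ⟨δM, hδM, hM⟩ := isCompact_Icc.exists_isMaxOn ⟨a, Set.left_mem_Icc.2 hab⟩ hcont0
  set M := BhatP δM C d w ξ0 with hMdef
  have hM0 : 0 ≤ M := BhatP_nonneg C hd hw (hIccA δM hδM).1 (hIccA δM hδM).2 hrecenter ξ0
  have hMle : ∀ δ ∈ Set.Icc a b, BhatP δ C d w ξ0 ≤ M := fun δ hδ => hM hδ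
  set dmax := Finset.univ.sup' Finset.univ_nonempty d with hdmaxdef
  have hdmaxge : ∀ i, d i ≤ dmax := fun i => Finset.le_sup' d (Finset.mem_univ i)
  have hdmax0 : 0 < dmax := lt_of_lt_of_le (hd i0) (hdmaxge i0)
  set R0 := Finset.univ.sup' Finset.univ_nonempty (fun i => |d i - C.mulVec ξ0 i|) with hR0def
  have hR0ge : ∀ i, |d i - C.mulVec ξ0 i| ≤ R0 :=
    fun i => Finset.le_sup' (fun i => |d i - C.mulVec ξ0 i|) (Finset.mem_univ i)
  have hR0nonneg : 0 ≤ R0 := le_trans (abs_nonneg _) (hR0ge i0)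
  set R := (2*dmax + b)*(M+1) + b + R0 + 1 with hRdef
  have hRb : b ≤ R := by nlinarith
  set K := {ξ : Fin r → ℝ | ∀ i, |d i - C.mulVec ξ i| ≤ R} with hKdef
  have hKcpt : IsCompact K := K_cpt C d (C_inj C hd hcompact) R
  set T := K ∩ {ξ : Fin r → ℝ | ∃ i, C.mulVec ξ i = d i} with hTdef
  have hTcpt : IsCompact T := by
    refine hKcpt.inter_right ?_
    have he : {ξ : Fin r → ℝ | ∃ i, C.mulVec ξ i = d i}
        = ⋃ i, {ξ : Fin r → ℝ | C.mulVec ξ i = d i} := by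
      ext ξ; simp
    rw [he]
    refine isClosed_iUnion_of_finite fun i => ?_
    have hmv : Continuous (fun ξ : Fin r → ℝ => C.mulVec ξ i) := by
      simp only [Matrix.mulVec, dotProduct]
      exact continuous_finset_sum _ fun j _ => continuous_const.mul (continuous_apply j)
    exact isClosed_eq hmv continuous_const
  have hξ0K : ξ0 ∈ K := fun i => le_trans (hR0ge i) (by nlinarith)
  have hTne : T.Nonempty := ⟨ξ0, hξ0K, ⟨i0, hξ0⟩⟩
  set F := fun δ => sInf ((fun ξ => BhatP δ C d w ξ) '' T) with hFdef
  have hFcont : ContinuousOn F (Set.Icc a b) := by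
    refine cont_inf hTcpt hTne ?_
    exact (BhatP_joint_cont C d w).mono (fun p hp => (hIccA p.1 hp.1).1)
  have hEq : ∀ δ ∈ Set.Icc a b, betaBar δ = F δ := by
    intro δ hδ
    obtain ⟨hδpos, hδled⟩ := hIccA δ hδ
    have hSne : {t : ℝ | ∃ (i : Fin q) (ξ : Fin r → ℝ),
        C.mulVec ξ i = d i ∧ t = BhatP δ C d w ξ}.Nonempty :=
      ⟨BhatP δ C d w ξ0, i0, ξ0, hξ0, rfl⟩
    have hSbdd : BddBelow {t : ℝ | ∃ (i : Fin q) (ξ : Fin r → ℝ),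
        C.mulVec ξ i = d i ∧ t = BhatP δ C d w ξ} := by
      refine ⟨0, ?_⟩
      rintro t ⟨i, ξ, hiξ, rfl⟩
      exact BhatP_nonneg C hd hw hδpos hδled hrecenter ξ
    have himgne : ((fun ξ => BhatP δ C d w ξ) '' T).Nonempty := hTne.image _
    have himgbdd : BddBelow ((fun ξ => BhatP δ C d w ξ) '' T) := by
      refine ⟨0, ?_⟩
      rintro t ⟨ξ, hξT, rfl⟩
      exact BhatP_nonneg C hd hw hδpos hδled hrecenter ξ
    have himgsub : ((fun ξ => BhatP δ C d w ξ) '' T) ⊆ {t : ℝ | ∃ (i : Fin q) (ξ : Fin r → ℝ),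
        C.mulVec ξ i = d i ∧ t = BhatP δ C d w ξ} := by
      rintro t ⟨ξ, ⟨hξK, ⟨i, hi⟩⟩, rfl⟩
      exact ⟨i, ξ, hi, rfl⟩
    rw [hbb δ]
    refine le_antisymm (csInf_le_csInf hSbdd himgne himgsub) ?_
    refine le_csInf hSne ?_
    rintro t ⟨i, ξ, hiξ, rfl⟩
    rcases le_or_gt (BhatP δ C d w ξ) M with hcase | hcase
    · have hξK : ξ ∈ K := by
        intro i'
        have hσ : sigma δ (d i') (-(C.mulVec ξ i') + d i') ≤ M :=
          le_trans (BhatP_single_le C hd hw hδpos hδled hrecenter ξ i') hcase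
        set z := -(C.mulVec ξ i') + d i' with hzdef
        have hze : d i' - C.mulVec ξ i' = z := by rw [hzdef]; ring
        rw [hze]
        have hδb : δ ≤ b := hδ.2
        rcases le_or_gt z 0 with hzneg | hzpos
        · have hquad := key_quad_tail (δ := δ) (D := d i') (z := z) hδpos (hδled i') hzneg
          have hzM : z^2/(2*δ^2) ≤ M := by
            unfold sigma at hσ
            linarith
          have hz2 : z^2 ≤ 2*δ^2*M := by
            rw [div_le_iff₀ (by positivity)] at hzM
            linarith
          have hδ2b : δ^2 ≤ b^2 := by nlinarith
          have hzb2 : z^2 ≤ (b*(M+1))^2 := by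
            have hh1 : 2*δ^2*M ≤ 2*b^2*M := by nlinarith
            have hh2 : 0 ≤ b^2*(M^2+1) := by positivity
            nlinarith
          have habs : |z| ≤ b*(M+1) := abs_le_of_sq_le_sq hzb2 (by positivity)
          have hfin : b*(M+1) ≤ R := by nlinarith
          linarith
        · rcases le_or_gt z δ with hzd | hzd
          · rw [abs_of_pos hzpos]
            linarith
          · have htail := key_tail (δ := δ) (D := d i') (z := z) hδpos (hd i') hzd
            have hzM : z/(2*(d i')) ≤ M + 1 := by
              unfold sigma at hσ
              linarith
            have hz2 : z ≤ 2*(d i')*(M+1) := by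
              rw [div_le_iff₀ (by linarith [hd i'] : (0:ℝ) < 2*(d i'))] at hzM
              linarith
            have hzd' : z ≤ 2*dmax*(M+1) := by nlinarith [hdmaxge i', hd i']
            rw [abs_of_pos hzpos]
            nlinarith
      have hmemimg : BhatP δ C d w ξ ∈ ((fun ξ => BhatP δ C d w ξ) '' T) :=
        ⟨ξ, ⟨hξK, ⟨i, hiξ⟩⟩, rfl⟩
      exact csInf_le himgbdd hmemimg
    · have h1 : F δ ≤ BhatP δ C d w ξ0 := csInf_le himgbdd ⟨ξ0, ⟨hξ0K, ⟨i0, hξ0⟩⟩, rfl⟩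
      have h2 : BhatP δ C d w ξ0 ≤ M := hMle δ hδ
      linarith
  have hmemIcc : δ0 ∈ Set.Icc a b := ⟨le_of_lt haδ0, hδ0b⟩
  have hsubA : {δ : ℝ | 0 < δ ∧ ∀ i, δ ≤ d i} ∩ Set.Ioi a ⊆ Set.Icc a b := by
    rintro δ ⟨hδA, hδa⟩
    exact ⟨le_of_lt hδa, Finset.le_inf' _ _ fun i _ => hδA.2 i⟩
  have hmemfilter : {δ : ℝ | 0 < δ ∧ ∀ i, δ ≤ d i} ∩ Set.Ioi a
      ∈ nhdsWithin δ0 {δ : ℝ | 0 < δ ∧ ∀ i, δ ≤ d i} :=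
    Filter.inter_mem self_mem_nhdsWithin (mem_nhdsWithin_of_mem_nhds (Ioi_mem_nhds haδ0))
  have hFwA : ContinuousWithinAt F {δ : ℝ | 0 < δ ∧ ∀ i, δ ≤ d i} δ0 := by
    refine (hFcont δ0 hmemIcc).mono_of_mem_nhdsWithin ?_
    exact Filter.mem_of_superset hmemfilter hsubA
  refine hFwA.congr_of_eventuallyEq ?_ (hEq δ0 hmemIcc)
  refine Filter.eventuallyEq_of_mem hmemfilter ?_
  intro δ hδ
  exact hEq δ (hsubA hδ)
end
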